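/- arXiv:2507.15102 — 2 statements merged into one kernel-verified Lean document; each statement's English description precedes it below -/
import Mathlib

section
/- Let E ⊆ ℝⁿ be a bounded measurable set and 𝓕 a family of measurable functions on E (extended by zero to ℝⁿ). If 𝓕 is almost equicontinuous, then for each ε > 0 there exists r > 0 such that ∫_{ℝⁿ} min(|f(x+y) − f(x)|,1) dx < ε for every |y| < r and all f ∈ 𝓕. -/
open MeasureTheory ENNReal Filter Set
open scoped symmDiff Topology

lemma tendsto_volume_symmDiff_translate {n : ℕ} (E : Set (EuclideanSpace ℝ (Fin n)))
    (hE : MeasurableSet E) (hfin : volume E ≠ ⊤) :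
    Tendsto (fun y : EuclideanSpace ℝ (Fin n) =>
      volume ((((· + y) : EuclideanSpace ℝ (Fin n) → _) ⁻¹' E) ∆ E)) (𝓝 0) (𝓝 0) := by
  let cm : C(EuclideanSpace ℝ (Fin n), C(EuclideanSpace ℝ (Fin n), EuclideanSpace ℝ (Fin n))) :=
    ContinuousMap.curry ⟨fun p => p.2 + p.1, continuous_snd.add continuous_fst⟩
  have hmp : ∀ y : EuclideanSpace ℝ (Fin n), MeasurePreserving (⇑(cm y)) volume volume :=
    fun y => measurePreserving_add_right volume y
  have h := tendsto_measure_symmDiff_preimage_nhds_zero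
    (μ := (volume : Measure (EuclideanSpace ℝ (Fin n)))) (ν := volume)
    (cm.continuous.tendsto 0)
    (Eventually.of_forall hmp) (hmp 0) hE.nullMeasurableSet hfin
  have he : (⇑(cm 0)) ⁻¹' E = E := by
    have : ⇑(cm 0) = fun x : EuclideanSpace ℝ (Fin n) => x + 0 := rfl
    simp [this]
  rw [he] at h
  exact h

/-- Almost equicontinuity of a family of functions on a set E. -/
def AlmostEquicontinuous {n : ℕ} (E : Set (EuclideanSpace ℝ (Fin n)))
    (F : Set (EuclideanSpace ℝ (Fin n) → ℝ)) : Prop :=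
  ∀ ε > (0 : ℝ), ∃ δ > (0 : ℝ), ∀ f ∈ F, ∃ B ⊆ E,
    volume B < ENNReal.ofReal ε ∧
    ∀ x₁ ∈ E \ B, ∀ x₂ ∈ E \ B, ‖x₁ - x₂‖ < δ → |f x₁ - f x₂| < ε

theorem almostEquicontinuous_translation {n : ℕ}
    (E : Set (EuclideanSpace ℝ (Fin n))) (hE : MeasurableSet E)
    (hEbd : Bornology.IsBounded E)
    (F : Set (EuclideanSpace ℝ (Fin n) → ℝ))
    (hmeas : ∀ f ∈ F, Measurable f)
    (hsupp : ∀ f ∈ F, ∀ x ∉ E, f x = 0)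
    (heq : AlmostEquicontinuous E F) :
    ∀ ε > (0 : ℝ), ∃ r > (0 : ℝ), ∀ y : EuclideanSpace ℝ (Fin n), ‖y‖ < r →
      ∀ f ∈ F,
      (∫⁻ x, ENNReal.ofReal (min |f (x + y) - f x| 1)) < ENNReal.ofReal ε := by
  intro ε hε
  set V : ℝ := (volume E).toReal with hV
  have hV0 : 0 ≤ V := ENNReal.toReal_nonneg
  have hVE : volume E = ENNReal.ofReal V := (ENNReal.ofReal_toReal hEbd.measure_lt_top.ne).symm
  set ε₀ : ℝ := min (ε / 4) (ε / (4 * (V + 1))) with hε₀def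
  have hε₀pos : 0 < ε₀ := lt_min (by linarith) (by positivity)
  have hε₀le : ε₀ ≤ ε / 4 := min_le_left _ _
  have hε₀V : ε₀ * V < ε / 4 := by
    have h1 : ε₀ * V ≤ (ε / (4 * (V + 1))) * V :=
      mul_le_mul_of_nonneg_right (min_le_right _ _) hV0
    have h2 : (ε / (4 * (V + 1))) * V < ε / 4 := by
      rw [div_mul_eq_mul_div, div_lt_div_iff₀ (by positivity) (by norm_num)]
      nlinarith
    linarith
  obtain ⟨δ, hδpos, hδ⟩ := heq ε₀ hε₀pos
  have hq : (0:ℝ≥0∞) < ENNReal.ofReal (ε / 4) := ENNReal.ofReal_pos.2 (by linarith)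
  have hT' : ∀ᶠ y : EuclideanSpace ℝ (Fin n) in 𝓝 0,
      volume ((((· + y) : EuclideanSpace ℝ (Fin n) → _) ⁻¹' E) ∆ E) < ENNReal.ofReal (ε / 4) :=
    tendsto_volume_symmDiff_translate E hE hEbd.measure_lt_top.ne (Iio_mem_nhds hq)
  rw [Metric.eventually_nhds_iff] at hT'
  obtain ⟨r₁, hr₁pos, hr₁⟩ := hT'
  refine ⟨min δ r₁, lt_min hδpos hr₁pos, fun y hy f hf => ?_⟩
  have hyδ : ‖y‖ < δ := hy.trans_le (min_le_left _ _)
  have hyr₁ : ‖y‖ < r₁ := hy.trans_le (min_le_right _ _)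
  obtain ⟨B₀, hB₀E, hB₀vol, hB₀⟩ := hδ f hf
  obtain ⟨B₁, hB₁sub, hB₁meas, hB₁vol⟩ := exists_measurable_superset volume B₀
  set B : Set (EuclideanSpace ℝ (Fin n)) := B₁ ∩ E with hBdef
  have hBmeas : MeasurableSet B := hB₁meas.inter hE
  have hBvol : volume B < ENNReal.ofReal ε₀ := by
    calc volume B ≤ volume B₁ := measure_mono inter_subset_left
    _ = volume B₀ := hB₁vol
    _ < _ := hB₀vol
  have hBgood : ∀ x₁ ∈ E \ B, ∀ x₂ ∈ E \ B, ‖x₁ - x₂‖ < δ → |f x₁ - f x₂| < ε₀ := by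
    intro x₁ h₁ x₂ h₂ hd
    exact hB₀ x₁ ⟨h₁.1, fun hx => h₁.2 ⟨hB₁sub hx, h₁.1⟩⟩
      x₂ ⟨h₂.1, fun hx => h₂.2 ⟨hB₁sub hx, h₂.1⟩⟩ hd
  set Ey : Set (EuclideanSpace ℝ (Fin n)) := ((· + y) : EuclideanSpace ℝ (Fin n) → _) ⁻¹' E with hEy
  set By : Set (EuclideanSpace ℝ (Fin n)) := ((· + y) : EuclideanSpace ℝ (Fin n) → _) ⁻¹' B with hBy
  have hmeasadd : Measurable ((· + y) : EuclideanSpace ℝ (Fin n) → _) := measurable_add_const y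
  have hEymeas : MeasurableSet Ey := hmeasadd hE
  have hBymeas : MeasurableSet By := hmeasadd hBmeas
  set D : Set (EuclideanSpace ℝ (Fin n)) := (Ey ∆ E) ∪ B ∪ By with hD
  have hDmeas : MeasurableSet D := ((hEymeas.symmDiff hE).union hBmeas).union hBymeas
  have hpt : ∀ x, ENNReal.ofReal (min |f (x + y) - f x| 1) ≤
      (E ∩ Ey).indicator (fun _ => ENNReal.ofReal ε₀) x + D.indicator (fun _ => 1) x := by
    intro x
    by_cases hx : x ∈ E ∩ Ey
    · by_cases hxB : x ∈ B ∪ By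
      · have hxD : x ∈ D := by
          rcases hxB with h | h
          exacts [Or.inl (Or.inr h), Or.inr h]
        calc ENNReal.ofReal (min |f (x + y) - f x| 1) ≤ 1 :=
              ENNReal.ofReal_le_one.2 (min_le_right _ _)
        _ = D.indicator (fun _ => 1) x := (indicator_of_mem hxD (fun _ => (1:ℝ≥0∞))).symm
        _ ≤ _ := le_add_self
      · have h1 : x ∈ E \ B := ⟨hx.1, fun h => hxB (Or.inl h)⟩
        have h2 : x + y ∈ E \ B := ⟨hx.2, fun h => hxB (Or.inr h)⟩
        have hlt : |f (x + y) - f x| < ε₀ :=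
          hBgood (x + y) h2 x h1 (by simpa using hyδ)
        calc ENNReal.ofReal (min |f (x + y) - f x| 1)
              ≤ ENNReal.ofReal ε₀ := ENNReal.ofReal_le_ofReal ((min_le_left _ _).trans hlt.le)
        _ = (E ∩ Ey).indicator (fun _ => ENNReal.ofReal ε₀) x := (indicator_of_mem hx (fun _ => ENNReal.ofReal ε₀)).symm
        _ ≤ _ := le_self_add
    · by_cases hxE : x ∈ E ∪ Ey
      · have hxD : x ∈ D := by
          left; left
          rcases hxE with h | h
          · exact Or.inr ⟨h, fun h' => hx ⟨h, h'⟩⟩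
          · exact Or.inl ⟨h, fun h' => hx ⟨h', h⟩⟩
        calc ENNReal.ofReal (min |f (x + y) - f x| 1) ≤ 1 :=
              ENNReal.ofReal_le_one.2 (min_le_right _ _)
        _ = D.indicator (fun _ => 1) x := (indicator_of_mem hxD (fun _ => (1:ℝ≥0∞))).symm
        _ ≤ _ := le_add_self
      · have hfx : f x = 0 := hsupp f hf x (fun h => hxE (Or.inl h))
        have hfxy : f (x + y) = 0 := hsupp f hf (x + y) (fun h => hxE (Or.inr h))
        simp [hfx, hfxy]
  have hint : (∫⁻ x, ENNReal.ofReal (min |f (x + y) - f x| 1)) ≤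
      ENNReal.ofReal ε₀ * volume (E ∩ Ey) + volume D := by
    calc (∫⁻ x, ENNReal.ofReal (min |f (x + y) - f x| 1))
        ≤ ∫⁻ x, ((E ∩ Ey).indicator (fun _ => ENNReal.ofReal ε₀) x + D.indicator (fun _ => 1) x) :=
          lintegral_mono hpt
    _ = (∫⁻ x, (E ∩ Ey).indicator (fun _ => ENNReal.ofReal ε₀) x) +
          ∫⁻ x, D.indicator (fun _ => 1) x :=
          lintegral_add_left (measurable_const.indicator (hE.inter hEymeas)) _
    _ = ENNReal.ofReal ε₀ * volume (E ∩ Ey) + 1 * volume D := by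
          rw [lintegral_indicator_const (hE.inter hEymeas), lintegral_indicator_const hDmeas]
    _ = _ := by rw [one_mul]
  have hByvol : volume By = volume B :=
    (measurePreserving_add_right volume y).measure_preimage hBmeas.nullMeasurableSet
  have hq4 : ENNReal.ofReal (ε/4) + ENNReal.ofReal (ε/4) + ENNReal.ofReal (ε/4) +
      ENNReal.ofReal (ε/4) = ENNReal.ofReal ε := by
    rw [← ENNReal.ofReal_add (by linarith) (by linarith),
        ← ENNReal.ofReal_add (by linarith) (by linarith),
        ← ENNReal.ofReal_add (by linarith) (by linarith)]
    congr 1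
    ring
  have hA : ENNReal.ofReal ε₀ * volume (E ∩ Ey) < ENNReal.ofReal (ε/4) := by
    calc ENNReal.ofReal ε₀ * volume (E ∩ Ey) ≤ ENNReal.ofReal ε₀ * volume E :=
          mul_le_mul_right (measure_mono inter_subset_left) _
    _ = ENNReal.ofReal (ε₀ * V) := by rw [hVE, ← ENNReal.ofReal_mul hε₀pos.le]
    _ < ENNReal.ofReal (ε/4) := (ENNReal.ofReal_lt_ofReal_iff (by linarith)).2 hε₀V
  have hB4 : volume B < ENNReal.ofReal (ε/4) :=
    hBvol.trans_le (ENNReal.ofReal_le_ofReal hε₀le)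
  have hBy4 : volume By < ENNReal.ofReal (ε/4) := by rw [hByvol]; exact hB4
  have hΔ : volume (Ey ∆ E) < ENNReal.ofReal (ε/4) := hr₁ (by rwa [dist_zero_right])
  calc (∫⁻ x, ENNReal.ofReal (min |f (x + y) - f x| 1))
      ≤ ENNReal.ofReal ε₀ * volume (E ∩ Ey) + volume D := hint
  _ ≤ ENNReal.ofReal ε₀ * volume (E ∩ Ey) + (volume (Ey ∆ E) + volume B + volume By) := by
      gcongr
      calc volume D ≤ volume ((Ey ∆ E) ∪ B) + volume By := measure_union_le _ _
      _ ≤ volume (Ey ∆ E) + volume B + volume By := by gcongr; exact measure_union_le _ _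
  _ < ENNReal.ofReal (ε/4) + (ENNReal.ofReal (ε/4) + ENNReal.ofReal (ε/4) + ENNReal.ofReal (ε/4)) :=
      ENNReal.add_lt_add hA (ENNReal.add_lt_add (ENNReal.add_lt_add hΔ hB4) hBy4)
  _ = ENNReal.ofReal ε := by rw [← hq4]; ring
end

section
/- Let E ⊆ ℝⁿ be a bounded measurable set. If a family 𝓕 of measurable real-valued functions on E is totally bounded with respect to the F-seminorm f ↦ ∫_E min(|f|,1) dx, then 𝓕 is almost equicontinuous. -/
open MeasureTheory ENNReal

lemma key_approx {n : ℕ} (E : Set (EuclideanSpace ℝ (Fin n))) (hE : MeasurableSet E)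
    (hEfin : volume E < ⊤) (g : EuclideanSpace ℝ (Fin n) → ℝ) (hg : Measurable g)
    {ε : ℝ} (hε : 0 < ε) :
    ∃ h : EuclideanSpace ℝ (Fin n) → ℝ, UniformContinuous h ∧ ∃ T ⊆ E,
      volume T < ENNReal.ofReal ε ∧ ∀ x ∈ E \ T, |g x - h x| < ε := by
  -- tail bound
  obtain ⟨M, hM⟩ : ∃ M : ℕ, volume ({x | (M : ℝ) < |g x|} ∩ E) < ENNReal.ofReal (ε/2) := by
    set s : ℕ → Set (EuclideanSpace ℝ (Fin n)) := fun M => {x | (M : ℝ) < |g x|} ∩ E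
    have hs : ∀ M, MeasurableSet (s M) := fun M =>
      ((measurableSet_lt measurable_const hg.abs)).inter hE
    have hmono : Antitone s := by
      intro a b hab x hx
      refine ⟨?_, hx.2⟩
      have h1 : (a:ℝ) ≤ b := Nat.cast_le.2 hab
      exact lt_of_le_of_lt h1 hx.1
    have hiInter : ⋂ M, s M = ∅ := by
      ext x
      simp only [Set.mem_iInter, Set.mem_empty_iff_false, iff_false]
      intro h
      obtain ⟨M, hM⟩ := exists_nat_gt |g x|
      exact absurd (h M).1 (not_lt.2 hM.le)
    have h1 := tendsto_measure_iInter_atTop (fun M => (hs M).nullMeasurableSet) hmono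
      ⟨0, (lt_of_le_of_lt (measure_mono Set.inter_subset_right) hEfin).ne⟩
    rw [hiInter, measure_empty] at h1
    exact (h1.eventually_lt_const (by simp [hε] : (0:ℝ≥0∞) < ENNReal.ofReal (ε/2))).exists
  -- truncate and cut off
  set G₀ : EuclideanSpace ℝ (Fin n) → ℝ :=
    E.indicator (fun x => max (-(M:ℝ)) (min (g x) M)) with hG₀
  have hclamp_meas : Measurable fun x => max (-(M:ℝ)) (min (g x) (M:ℝ)) :=
    measurable_const.max (hg.min measurable_const)
  have : IsFiniteMeasure (volume.restrict E) := ⟨by rwa [Measure.restrict_apply_univ]⟩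
  have hint : Integrable G₀ volume := by
    rw [hG₀, integrable_indicator_iff hE]
    refine (integrable_const (M:ℝ)).mono' hclamp_meas.aestronglyMeasurable ?_
    refine Filter.Eventually.of_forall fun x => ?_
    rw [Real.norm_eq_abs, abs_le]
    exact ⟨le_max_left _ _, max_le (neg_le_self (Nat.cast_nonneg M)) (min_le_right _ _)⟩
  -- continuous approximation
  obtain ⟨h, hhcs, hhl1, hhcont, -⟩ :=
    hint.exists_hasCompactSupport_lintegral_sub_le
      (ε := ENNReal.ofReal (ε * (ε/4))) (by positivity)
  have hhuc : UniformContinuous h := hhcs.uniformContinuous_of_continuous hhcont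
  -- Chebyshev for G₀ - h
  have hcheb : volume {x | ε ≤ |G₀ x - h x|} < ENNReal.ofReal (ε/2) := by
    have hmeas2 : AEMeasurable (fun x => (‖G₀ x - h x‖₊ : ℝ≥0∞)) volume :=
      ((hint.aemeasurable.sub hhcont.measurable.aemeasurable).nnnorm).coe_nnreal_ennreal
    have h2 := mul_meas_ge_le_lintegral₀ hmeas2 (ENNReal.ofReal ε)
    have hsets : {x | ε ≤ |G₀ x - h x|} ⊆ {x | ENNReal.ofReal ε ≤ (‖G₀ x - h x‖₊ : ℝ≥0∞)} := by
      intro x hx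
      rw [Set.mem_setOf_eq, ← enorm_eq_nnnorm, ← ofReal_norm, Real.norm_eq_abs]
      exact ENNReal.ofReal_le_ofReal hx
    have h3 : ENNReal.ofReal ε * volume {x | ε ≤ |G₀ x - h x|}
        ≤ ENNReal.ofReal ε * ENNReal.ofReal (ε/4) := by
      calc ENNReal.ofReal ε * volume {x | ε ≤ |G₀ x - h x|}
          ≤ ENNReal.ofReal ε * volume {x | ENNReal.ofReal ε ≤ (‖G₀ x - h x‖₊ : ℝ≥0∞)} := by
            exact mul_le_mul_right (measure_mono hsets) _
        _ ≤ ∫⁻ x, (‖G₀ x - h x‖₊ : ℝ≥0∞) := h2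
        _ ≤ ENNReal.ofReal (ε * (ε/4)) := hhl1
        _ = ENNReal.ofReal ε * ENNReal.ofReal (ε/4) := ENNReal.ofReal_mul hε.le
    have h4 : volume {x | ε ≤ |G₀ x - h x|} ≤ ENNReal.ofReal (ε/4) :=
      (ENNReal.mul_le_mul_iff_right (by simp [hε]) ofReal_ne_top).1 h3
    exact lt_of_le_of_lt h4 ((ENNReal.ofReal_lt_ofReal_iff (by linarith)).2 (by linarith))
  refine ⟨h, hhuc, ({x | (M : ℝ) < |g x|} ∩ E) ∪ ({x | ε ≤ |G₀ x - h x|} ∩ E),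
    Set.union_subset Set.inter_subset_right Set.inter_subset_right, ?_, ?_⟩
  · calc volume _ ≤ volume ({x | (M : ℝ) < |g x|} ∩ E) + volume ({x | ε ≤ |G₀ x - h x|} ∩ E) :=
        measure_union_le _ _
      _ < ENNReal.ofReal (ε/2) + ENNReal.ofReal (ε/2) :=
        ENNReal.add_lt_add hM (lt_of_le_of_lt (measure_mono Set.inter_subset_left) hcheb)
      _ = ENNReal.ofReal ε := by rw [← ENNReal.ofReal_add (by linarith) (by linarith)]; ring_nf
  · intro x hx
    obtain ⟨hxE, hxT⟩ := hx
    rw [Set.mem_union, not_or] at hxT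
    have hgx : |g x| ≤ (M:ℝ) := by
      by_contra hcon
      exact hxT.1 ⟨lt_of_not_ge hcon, hxE⟩
    have hG₀x : G₀ x = g x := by
      rw [hG₀, Set.indicator_of_mem hxE]
      rw [abs_le] at hgx
      rw [min_eq_left hgx.2, max_eq_right hgx.1]
    have : ¬ ε ≤ |G₀ x - h x| := fun hcon => hxT.2 ⟨hcon, hxE⟩
    rw [hG₀x] at this
    linarith [lt_of_not_ge this]


theorem almostEquicontinuous_of_totallyBounded {n : ℕ}
    (E : Set (EuclideanSpace ℝ (Fin n))) (hE : MeasurableSet E)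
    (hEbd : Bornology.IsBounded E)
    (F : Set (EuclideanSpace ℝ (Fin n) → ℝ))
    (hmeas : ∀ f ∈ F, Measurable f)
    (htb : ∀ ε > (0 : ℝ), ∃ G : Set (EuclideanSpace ℝ (Fin n) → ℝ), G.Finite ∧
      (∀ g ∈ G, Measurable g) ∧
      ∀ f ∈ F, ∃ g ∈ G,
        (∫⁻ x in E, ENNReal.ofReal (min |f x - g x| 1)) < ENNReal.ofReal ε) :
    AlmostEquicontinuous E F := by
  intro ε hε
  have hε5 : 0 < ε / 5 := by linarith
  -- E has finite measure
  have hEfin : volume E < ⊤ := by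
    obtain ⟨r, hr⟩ := hEbd.subset_closedBall 0
    exact lt_of_le_of_lt (measure_mono hr) (measure_closedBall_lt_top)
  -- net of accuracy min (ε/5) 1 * (ε/2)
  obtain ⟨G, hGfin, hGmeas, hGnet⟩ := htb (min (ε/5) 1 * (ε/2))
    (by positivity)
  -- for each g in G, a uniformly continuous approximation
  have key : ∀ g ∈ G, ∃ h : EuclideanSpace ℝ (Fin n) → ℝ, UniformContinuous h ∧ ∃ T ⊆ E,
      volume T < ENNReal.ofReal (ε/4) ∧ ∀ x ∈ E \ T, |g x - h x| < ε/5 := by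
    intro g hg
    obtain ⟨h, hhuc, T, hTE, hTv, hTb⟩ := key_approx E hE hEfin g (hGmeas g hg)
      (ε := min (ε/5) (ε/4)) (by positivity)
    refine ⟨h, hhuc, T, hTE, lt_of_lt_of_le hTv
      (ENNReal.ofReal_le_ofReal (min_le_right _ _)), fun x hx => ?_⟩
    exact lt_of_lt_of_le (hTb x hx) (min_le_left _ _)
  choose! h hhuc T hTE hTv hTb using key
  -- uniform continuity moduli
  have hδ : ∀ g ∈ G, ∃ δ > (0:ℝ), ∀ x y : EuclideanSpace ℝ (Fin n),
      dist x y < δ → |h g x - h g y| < ε/5 := by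
    intro g hg
    obtain ⟨δ, hδpos, hδ⟩ := Metric.uniformContinuous_iff.1 (hhuc g hg) (ε/5) hε5
    exact ⟨δ, hδpos, fun x y hxy => by
      have := hδ hxy
      rwa [Real.dist_eq] at this⟩
  choose! δ hδpos hδspec using hδ
  -- uniform δ over the finite net
  obtain ⟨δ₀, hδ₀pos, hδ₀le⟩ : ∃ δ₀ > (0:ℝ), ∀ g ∈ G, δ₀ ≤ δ g := by
    rcases G.eq_empty_or_nonempty with rfl | hne
    · exact ⟨1, one_pos, by simp⟩
    · have hne' : hGfin.toFinset.Nonempty := by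
        rwa [Set.Finite.toFinset_nonempty]
      refine ⟨hGfin.toFinset.inf' hne' δ, ?_, ?_⟩
      · rw [gt_iff_lt, Finset.lt_inf'_iff]
        intro g hg
        exact hδpos g (hGfin.mem_toFinset.1 hg)
      · intro g hg
        exact Finset.inf'_le _ (hGfin.mem_toFinset.2 hg)
  refine ⟨δ₀, hδ₀pos, fun f hf => ?_⟩
  obtain ⟨g, hgG, hfg⟩ := hGnet f hf
  -- Chebyshev set where f is far from g
  set S : Set (EuclideanSpace ℝ (Fin n)) := {x | ε/5 ≤ |f x - g x|} ∩ E with hS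
  have hSmeas : MeasurableSet S :=
    (measurableSet_le measurable_const ((hmeas f hf).sub (hGmeas g hgG)).abs).inter hE
  have hSV : volume S ≤ ENNReal.ofReal (ε/2) := by
    set a : ℝ≥0∞ := ENNReal.ofReal (min (ε/5) 1) with ha
    have ha0 : a ≠ 0 := by
      simp only [ha, ne_eq, ENNReal.ofReal_eq_zero, not_le]
      positivity
    have hint_meas : AEMeasurable (fun x => ENNReal.ofReal (min |f x - g x| 1))
        (volume.restrict E) :=
      (ENNReal.measurable_ofReal.comp
        (((hmeas f hf).sub (hGmeas g hgG)).abs.min measurable_const)).aemeasurable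
    have h2 := mul_meas_ge_le_lintegral₀ hint_meas a
    have hsub : S ⊆ {x | a ≤ ENNReal.ofReal (min |f x - g x| 1)} := by
      intro x hx
      rw [Set.mem_setOf_eq]
      refine ENNReal.ofReal_le_ofReal ?_
      exact le_min (min_le_of_left_le hx.1) (min_le_right _ _)
    have hSrestrict : volume S ≤ (volume.restrict E) {x | a ≤ ENNReal.ofReal (min |f x - g x| 1)} := by
      rw [Measure.restrict_apply₀']
      · exact measure_mono (Set.subset_inter (fun x hx => hsub hx) (fun x hx => hx.2))
      · exact hE.nullMeasurableSet
    have h3 : a * volume S ≤ a * ENNReal.ofReal (ε/2) := by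
      calc a * volume S ≤ a * (volume.restrict E) {x | a ≤ ENNReal.ofReal (min |f x - g x| 1)} :=
            mul_le_mul_right hSrestrict _
        _ ≤ ∫⁻ x in E, ENNReal.ofReal (min |f x - g x| 1) := h2
        _ ≤ ENNReal.ofReal (min (ε/5) 1 * (ε/2)) := hfg.le
        _ = a * ENNReal.ofReal (ε/2) := ENNReal.ofReal_mul (by positivity)
    exact (ENNReal.mul_le_mul_iff_right ha0 ofReal_ne_top).1 h3
  refine ⟨S ∪ T g, Set.union_subset Set.inter_subset_right (hTE g hgG), ?_, ?_⟩
  · calc volume (S ∪ T g) ≤ volume S + volume (T g) := measure_union_le _ _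
      _ < ENNReal.ofReal (ε/2) + ENNReal.ofReal (ε/4) :=
          ENNReal.add_lt_add_of_le_of_lt (lt_of_le_of_lt hSV ofReal_lt_top).ne hSV (hTv g hgG)
      _ ≤ ENNReal.ofReal ε := by
          rw [← ENNReal.ofReal_add (by positivity) (by positivity)]
          exact ENNReal.ofReal_le_ofReal (by linarith)
  · intro x₁ hx₁ x₂ hx₂ hd
    have hd' : dist x₁ x₂ < δ g := by
      rw [dist_eq_norm]
      exact lt_of_lt_of_le hd (hδ₀le g hgG)
    have h1 : |f x₁ - g x₁| < ε/5 := by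
      by_contra hc
      exact hx₁.2 (Or.inl ⟨le_of_not_gt hc, hx₁.1⟩)
    have h2 : |f x₂ - g x₂| < ε/5 := by
      by_contra hc
      exact hx₂.2 (Or.inl ⟨le_of_not_gt hc, hx₂.1⟩)
    have h3 : |g x₁ - h g x₁| < ε/5 :=
      hTb g hgG x₁ ⟨hx₁.1, fun hc => hx₁.2 (Or.inr hc)⟩
    have h4 : |g x₂ - h g x₂| < ε/5 :=
      hTb g hgG x₂ ⟨hx₂.1, fun hc => hx₂.2 (Or.inr hc)⟩
    have h5 : |h g x₁ - h g x₂| < ε/5 := hδspec g hgG x₁ x₂ hd'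
    have t1 : f x₁ - f x₂ = (f x₁ - g x₁) + (g x₁ - h g x₁) + (h g x₁ - h g x₂)
        + (h g x₂ - g x₂) + (g x₂ - f x₂) := by ring
    have t2 : |f x₁ - f x₂| ≤ |f x₁ - g x₁| + |g x₁ - h g x₁| + |h g x₁ - h g x₂|
        + |h g x₂ - g x₂| + |g x₂ - f x₂| := by
      rw [t1]
      exact (abs_add_le _ _).trans (add_le_add ((abs_add_le _ _).trans (add_le_add
        ((abs_add_le _ _).trans (add_le_add ((abs_add_le _ _).trans le_rfl) le_rfl)) le_rfl)) le_rfl)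
    rw [abs_sub_comm (h g x₂) (g x₂), abs_sub_comm (g x₂) (f x₂)] at t2
    linarith
end
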